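/- Let φ : X → Y be a code between shift spaces with X a shift of finite type. If φ is open, then φ has a uniform lifting length. -/

import Mathlib

open Set Filter

/-- The product topology on `ℤ → A`, where the alphabet `A` carries the
discrete topology. -/
def seqTop (A : Type*) : TopologicalSpace (ℤ → A) :=
  @Pi.topologicalSpace ℤ (fun _ => A) (fun _ => ⊥)

/-- The shift map `σ`, defined by `σ(x)_i = x_{i+1}`. -/
def shiftMap {A : Type*} (x : ℤ → A) : ℤ → A := fun i => x (i + 1)

/-- A shift space: a nonempty, closed, shift-invariant subset of `A^ℤ`. -/
def IsShiftSpace {A : Type*} (X : Set (ℤ → A)) : Prop :=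
  X.Nonempty ∧ @IsClosed _ (seqTop A) X ∧ shiftMap '' X = X

/-- The word `u` occurs in `x` at coordinate `i`. -/
def OccursAt {A : Type*} (x : ℤ → A) (u : List A) (i : ℤ) : Prop :=
  ∀ k : Fin u.length, x (i + ((k : ℕ) : ℤ)) = u.get k

/-- `u` is a word of the language `B(X)` of `X`. -/
def IsWordOf {A : Type*} (X : Set (ℤ → A)) (u : List A) : Prop :=
  ∃ x ∈ X, OccursAt x u 0

/-- A shift of finite type: a shift space defined by finitely many
forbidden words. -/
def IsSFT {A : Type*} (X : Set (ℤ → A)) : Prop :=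
  IsShiftSpace X ∧ ∃ F : Finset (List A),
    X = { x | ∀ u ∈ F, ∀ i : ℤ, ¬ OccursAt x u i }

/-- A code: a continuous shift-commuting map from `X` to `Y`. -/
def IsCode {A B : Type*} (X : Set (ℤ → A)) (Y : Set (ℤ → B))
    (φ : (ℤ → A) → (ℤ → B)) : Prop :=
  Set.MapsTo φ X Y ∧ @ContinuousOn _ _ (seqTop A) (seqTop B) φ X ∧
    ∀ x ∈ X, φ (shiftMap x) = shiftMap (φ x)

/-- A factor code: a surjective code. -/
def IsFactorCode {A B : Type*} (X : Set (ℤ → A)) (Y : Set (ℤ → B))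
    (φ : (ℤ → A) → (ℤ → B)) : Prop :=
  IsCode X Y φ ∧ Y ⊆ φ '' X

/-- A code is open if it maps (relatively) open subsets of `X` to
(relatively) open subsets of `Y`. -/
def IsOpenCode {A B : Type*} (X : Set (ℤ → A)) (Y : Set (ℤ → B))
    (φ : (ℤ → A) → (ℤ → B)) : Prop :=
  ∀ U : Set (ℤ → A), @IsOpen _ (seqTop A) U →
    ∃ V : Set (ℤ → B), @IsOpen _ (seqTop B) V ∧ φ '' (X ∩ U) = Y ∩ V

/-- A code has a uniform lifting length `l`. -/
def HasUniformLiftingLength {A B : Type*} (X : Set (ℤ → A)) (Y : Set (ℤ → B))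
    (φ : (ℤ → A) → (ℤ → B)) : Prop :=
  ∃ l : ℕ, ∀ k : ℕ, ∀ x ∈ X, ∀ y ∈ Y,
    (∀ i : ℤ, |i| ≤ (k : ℤ) + (l : ℤ) → φ x i = y i) →
    ∃ x' ∈ X, (∀ i : ℤ, |i| ≤ (k : ℤ) → x' i = x i) ∧ φ x' = y

/-- Right continuing code. -/
def IsRightContinuing {A B : Type*} (X : Set (ℤ → A)) (Y : Set (ℤ → B))
    (φ : (ℤ → A) → (ℤ → B)) : Prop :=
  ∀ x ∈ X, ∀ y ∈ Y, (∃ M : ℤ, ∀ i ≤ M, φ x i = y i) →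
    ∃ x' ∈ X, (∃ M : ℤ, ∀ i ≤ M, x' i = x i) ∧ φ x' = y

/-- Left continuing code. -/
def IsLeftContinuing {A B : Type*} (X : Set (ℤ → A)) (Y : Set (ℤ → B))
    (φ : (ℤ → A) → (ℤ → B)) : Prop :=
  ∀ x ∈ X, ∀ y ∈ Y, (∃ M : ℤ, ∀ i, M ≤ i → φ x i = y i) →
    ∃ x' ∈ X, (∃ M : ℤ, ∀ i, M ≤ i → x' i = x i) ∧ φ x' = y

/-- `n` is a right continuing retract of `φ`. -/
def IsRightRetract {A B : Type*} (X : Set (ℤ → A)) (Y : Set (ℤ → B))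
    (φ : (ℤ → A) → (ℤ → B)) (n : ℕ) : Prop :=
  ∀ x ∈ X, ∀ y ∈ Y, (∀ i : ℤ, i ≤ 0 → φ x i = y i) →
    ∃ x' ∈ X, φ x' = y ∧ ∀ i : ℤ, i ≤ -(n : ℤ) → x' i = x i

/-- `n` is a left continuing retract of `φ`. -/
def IsLeftRetract {A B : Type*} (X : Set (ℤ → A)) (Y : Set (ℤ → B))
    (φ : (ℤ → A) → (ℤ → B)) (n : ℕ) : Prop :=
  ∀ x ∈ X, ∀ y ∈ Y, (∀ i : ℤ, 0 ≤ i → φ x i = y i) →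
    ∃ x' ∈ X, φ x' = y ∧ ∀ i : ℤ, (n : ℤ) ≤ i → x' i = x i

/-- Right closing code. -/
def IsRightClosing {A B : Type*} (X : Set (ℤ → A))
    (φ : (ℤ → A) → (ℤ → B)) : Prop :=
  ∀ x ∈ X, ∀ x' ∈ X, (∃ M : ℤ, ∀ i ≤ M, x i = x' i) → φ x = φ x' → x = x'

/-- Left closing code. -/
def IsLeftClosing {A B : Type*} (X : Set (ℤ → A))
    (φ : (ℤ → A) → (ℤ → B)) : Prop :=
  ∀ x ∈ X, ∀ x' ∈ X, (∃ M : ℤ, ∀ i, M ≤ i → x i = x' i) → φ x = φ x' → x = x'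

/-- A sofic shift: a factor of a shift of finite type. -/
def IsSofic {B : Type*} (Y : Set (ℤ → B)) : Prop :=
  ∃ (C : Type) (_ : Fintype C) (Z : Set (ℤ → C)) (π : (ℤ → C) → (ℤ → B)),
    IsSFT Z ∧ IsFactorCode Z Y π

/-- Irreducibility of a shift space. -/
def IsIrreducibleShift {A : Type*} (X : Set (ℤ → A)) : Prop :=
  ∀ u v : List A, IsWordOf X u → IsWordOf X v →
    ∃ w : List A, IsWordOf X (u ++ w ++ v)

/-- Mixing shift space. -/
def IsMixingShift {A : Type*} (X : Set (ℤ → A)) : Prop :=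
  ∀ u v : List A, IsWordOf X u → IsWordOf X v →
    ∃ N : ℕ, ∀ n : ℕ, N ≤ n →
      ∃ w : List A, w.length = n ∧ IsWordOf X (u ++ w ++ v)

/-- The almost specification property. -/
def AlmostSpecified {A : Type*} (X : Set (ℤ → A)) : Prop :=
  ∃ N : ℕ, ∀ u v : List A, IsWordOf X u → IsWordOf X v →
    ∃ w : List A, w.length ≤ N ∧ IsWordOf X (u ++ w ++ v)

/-- The specification property. -/
def HasSpecification {A : Type*} (X : Set (ℤ → A)) : Prop :=
  ∃ N : ℕ, ∀ u v : List A, IsWordOf X u → IsWordOf X v →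
    ∃ w : List A, w.length = N ∧ IsWordOf X (u ++ w ++ v)

/-- A synchronizing word of `X`. -/
def IsSynchronizingWord {A : Type*} (X : Set (ℤ → A)) (v : List A) : Prop :=
  IsWordOf X v ∧ ∀ u w : List A, IsWordOf X (u ++ v) → IsWordOf X (v ++ w) →
    IsWordOf X (u ++ v ++ w)

/-- A synchronized system: an irreducible shift space with a synchronizing
word. -/
def IsSynchronizedSystem {A : Type*} (X : Set (ℤ → A)) : Prop :=
  IsIrreducibleShift X ∧ ∃ v : List A, IsSynchronizingWord X v

/-- A subshift of `X`. -/
def IsSubshiftOf {A : Type*} (X' X : Set (ℤ → A)) : Prop :=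
  IsShiftSpace X' ∧ X' ⊆ X

/-- The number of words of length `n` in the language of `X`. -/
noncomputable def wordCount {A : Type*} (X : Set (ℤ → A)) (n : ℕ) : ℕ :=
  Set.ncard { u : List A | u.length = n ∧ IsWordOf X u }

/-- The entropy `h(X) = lim (1/n) log |B_n(X)|` of a shift space (the limit
exists by subadditivity, hence equals the limsup used here). -/
noncomputable def entropy {A : Type*} (X : Set (ℤ → A)) : ℝ :=
  Filter.limsup (fun n : ℕ => Real.log (wordCount X n) / (n : ℝ)) Filter.atTop

/-- The periodic condition `P(X) ↘ P(Y)`. -/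
def PeriodicCondition {A B : Type*} (X : Set (ℤ → A)) (Y : Set (ℤ → B)) : Prop :=
  ∀ n : ℕ, 0 < n → (∃ x ∈ X, shiftMap^[n] x = x) → ∃ y ∈ Y, shiftMap^[n] y = y

/-- A cyclic cover `D_0, …, D_{p-1}` of a shift space `X`. -/
def IsCyclicCover {A : Type*} (X : Set (ℤ → A)) (p : ℕ)
    (D : ZMod p → Set (ℤ → A)) : Prop :=
  0 < p ∧
  (∀ i, @IsClosed _ (seqTop A) (D i) ∧ D i ⊆ X) ∧
  (⋃ i, D i) = X ∧
  (∀ i, shiftMap '' D i = D (i + 1)) ∧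
  (∀ i, ∀ U V : Set (ℤ → A), @IsOpen _ (seqTop A) U → @IsOpen _ (seqTop A) V →
    (D i ∩ U).Nonempty → (D i ∩ V).Nonempty →
    ∃ N : ℕ, ∀ n : ℕ, N ≤ n →
      ((shiftMap^[p * n] '' (D i ∩ U)) ∩ (D i ∩ V)).Nonempty) ∧
  (∀ i j, i ≠ j → ∀ U : Set (ℤ → A), @IsOpen _ (seqTop A) U →
    X ∩ U ⊆ D i ∩ D j → X ∩ U = ∅)

/-- A left ray of `X`, recorded as `z : ℕ → A` where `z n` is the symbol at
coordinate `-(n+1)`. -/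
def IsLeftRay {A : Type*} (X : Set (ℤ → A)) (z : ℕ → A) : Prop :=
  ∃ x ∈ X, ∀ n : ℕ, x (-((n : ℤ) + 1)) = z n

/-- Append the finite word `w` on the right of a left-infinite sequence `z`
(the last symbol of `w` ends up at coordinate `-1`). -/
def rayAppend {A : Type*} (z : ℕ → A) (w : List A) : ℕ → A :=
  fun n => if h : n < w.length then w.reverse.get ⟨n, by simpa using h⟩
           else z (n - w.length)

/-- A left transitive point: every word of `X` occurs in `x_{(-∞,0]}`. -/
def IsLeftTransitive {A : Type*} (X : Set (ℤ → A)) (x : ℤ → A) : Prop :=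
  ∀ u : List A, IsWordOf X u → ∃ i : ℤ, i + (u.length : ℤ) ≤ 1 ∧ OccursAt x u i

/-- A right transitive point: every word of `X` occurs in `x_{[0,∞)}`. -/
def IsRightTransitive {A : Type*} (X : Set (ℤ → A)) (x : ℤ → A) : Prop :=
  ∀ u : List A, IsWordOf X u → ∃ i : ℤ, 0 ≤ i ∧ OccursAt x u i

/-- Right continuing almost everywhere. -/
def IsRightContinuingAE {A B : Type*} (X : Set (ℤ → A)) (Y : Set (ℤ → B))
    (φ : (ℤ → A) → (ℤ → B)) : Prop :=
  ∀ x ∈ X, IsLeftTransitive X x → ∀ y ∈ Y, (∃ M : ℤ, ∀ i ≤ M, φ x i = y i) →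
    ∃ x' ∈ X, (∃ M : ℤ, ∀ i ≤ M, x' i = x i) ∧ φ x' = y

/-- Left continuing almost everywhere. -/
def IsLeftContinuingAE {A B : Type*} (X : Set (ℤ → A)) (Y : Set (ℤ → B))
    (φ : (ℤ → A) → (ℤ → B)) : Prop :=
  ∀ x ∈ X, IsRightTransitive X x → ∀ y ∈ Y, (∃ M : ℤ, ∀ i, M ≤ i → φ x i = y i) →
    ∃ x' ∈ X, (∃ M : ℤ, ∀ i, M ≤ i → x' i = x i) ∧ φ x' = y

/-- The bi-infinite concatenations of blocks `1 0^s`, `s ∈ S`: the positions of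
`1`s in `x` form the range of a strictly monotone `t : ℤ → ℤ` whose
consecutive gaps `t (n+1) - t n` all equal `s + 1` for some `s ∈ S`. -/
def GapConcat (S : Set ℕ) : Set (ℤ → Bool) :=
  { x | ∃ t : ℤ → ℤ, StrictMono t ∧ (∀ n : ℤ, ∃ s ∈ S, t (n + 1) = t n + (s : ℤ) + 1) ∧
      (∀ i : ℤ, x i = true ↔ ∃ n : ℤ, t n = i) }

/-- The `S`-gap shift: the smallest shift space over `{0,1}` containing all
bi-infinite concatenations of blocks from `{1 0^s : s ∈ S}`. -/
def SGapShift (S : Set ℕ) : Set (ℤ → Bool) :=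
  ⋂₀ { X : Set (ℤ → Bool) | IsShiftSpace X ∧ GapConcat S ⊆ X }

/-- cylinder set -/
def cylSet {A : Type*} (x : ℤ → A) (k : ℕ) : Set (ℤ → A) :=
  {z | ∀ i : ℤ, |i| ≤ (k : ℤ) → z i = x i}

lemma mem_cylSet_self {A : Type*} (x : ℤ → A) (k : ℕ) : x ∈ cylSet x k :=
  fun _ _ => rfl

lemma cylSet_eq_pi {A : Type*} (x : ℤ → A) (k : ℕ) :
    cylSet x k = (↑(Finset.Icc (-(k:ℤ)) k) : Set ℤ).pi (fun i => {x i}) := by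
  ext z
  constructor
  · intro h i hi
    simp only [Finset.coe_Icc, Set.mem_Icc] at hi
    exact h i (abs_le.2 hi)
  · intro h i hi
    exact h i (by simpa [Finset.coe_Icc, Set.mem_Icc] using abs_le.1 hi)

lemma cyl_open {A : Type*} (x : ℤ → A) (k : ℕ) :
    @IsOpen (ℤ → A) (seqTop A) (cylSet x k) := by
  letI : TopologicalSpace A := ⊥
  haveI : DiscreteTopology A := ⟨rfl⟩
  show IsOpen (cylSet x k)
  rw [cylSet_eq_pi]
  exact isOpen_set_pi (Finset.Icc _ _).finite_toSet (fun i _ => isOpen_discrete _)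

lemma cyl_closed {A : Type*} (x : ℤ → A) (k : ℕ) :
    @IsClosed (ℤ → A) (seqTop A) (cylSet x k) := by
  letI : TopologicalSpace A := ⊥
  haveI : DiscreteTopology A := ⟨rfl⟩
  show IsClosed (cylSet x k)
  rw [cylSet_eq_pi]
  exact isClosed_set_pi (fun i _ => isClosed_singleton)

lemma open_cyl_subset {B : Type*} (V : Set (ℤ → B))
    (hV : @IsOpen (ℤ → B) (seqTop B) V) (y : ℤ → B) (hy : y ∈ V) :
    ∃ m : ℕ, cylSet y m ⊆ V := by
  letI : TopologicalSpace B := ⊥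
  haveI : DiscreteTopology B := ⟨rfl⟩
  have hV' : IsOpen V := hV
  rw [isOpen_pi_iff] at hV'
  obtain ⟨I, u, hIu, hsub⟩ := hV' y hy
  refine ⟨I.sup (fun i => i.natAbs), fun y' hy' => hsub ?_⟩
  intro i hi
  have h1 : i.natAbs ≤ I.sup (fun i => i.natAbs) := Finset.le_sup hi
  have h2 : y' i = y i := hy' i (by rw [Int.abs_eq_natAbs]; exact_mod_cast h1)
  rw [h2]
  exact (hIu i hi).2

lemma cylSet_trans {A : Type*} {x y z : ℤ → A} {k m : ℕ} (hk : k ≤ m)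
    (hx : x ∈ cylSet y k) (hz : z ∈ cylSet y m) : z ∈ cylSet x k := by
  intro i hi
  rw [hz i (le_trans hi (by exact_mod_cast hk)), hx i hi]

/-- Curtis–Hedlund–Lyndon type uniformity. -/
lemma chl_radius {A B : Type*} [Fintype A] (X : Set (ℤ → A)) (φ : (ℤ → A) → (ℤ → B))
    (hXcl : @IsClosed _ (seqTop A) X)
    (hc : @ContinuousOn _ _ (seqTop A) (seqTop B) φ X) :
    ∃ N : ℕ, ∀ x ∈ X, ∀ z ∈ X, z ∈ cylSet x N → φ z 0 = φ x 0 := by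
  letI : TopologicalSpace A := ⊥
  letI : TopologicalSpace B := ⊥
  haveI : DiscreteTopology A := ⟨rfl⟩
  haveI : DiscreteTopology B := ⟨rfl⟩
  haveI : CompactSpace (ℤ → A) := Pi.compactSpace
  have hXc : IsCompact X := (show IsClosed X from hXcl).isCompact
  have hf : ContinuousOn (fun z => φ z 0) X :=
    (continuous_apply (0 : ℤ)).comp_continuousOn hc
  have key : ∀ x ∈ X, ∃ n : ℕ, ∀ z ∈ X, z ∈ cylSet x n → φ z 0 = φ x 0 := by
    intro x hx
    have h1 : {w : ℤ → A | φ w 0 = φ x 0} ∈ nhdsWithin x X := by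
      have := hf x hx (IsOpen.mem_nhds (isOpen_discrete {φ x 0}) rfl)
      exact this
    rw [mem_nhdsWithin] at h1
    obtain ⟨U, hUo, hxU, hUX⟩ := h1
    obtain ⟨n, hn⟩ := open_cyl_subset U hUo x hxU
    exact ⟨n, fun z hz hzc => hUX ⟨hn hzc, hz⟩⟩
  choose! g hg using key
  obtain ⟨t, htX, hcov⟩ := hXc.elim_nhds_subcover (fun x => cylSet x (g x))
    (fun x _ => (cyl_open x (g x)).mem_nhds (mem_cylSet_self x (g x)))
  refine ⟨t.sup g, fun x hx z hz hzc => ?_⟩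
  obtain ⟨x₀, hx₀t, hxc⟩ := by simpa using hcov hx
  have h1 : z ∈ cylSet x₀ (g x₀) := by
    intro i hi
    rw [hzc i (le_trans hi (by exact_mod_cast Finset.le_sup hx₀t))]
    exact hxc i hi
  rw [hg x₀ (htX _ hx₀t) z hz h1, hg x₀ (htX _ hx₀t) x hx hxc]

/-- Uniform lifting radius for a fixed central window `k`. -/
lemma unif_radius {A B : Type*} [Fintype A] [Fintype B]
    (X : Set (ℤ → A)) (Y : Set (ℤ → B)) (φ : (ℤ → A) → (ℤ → B))
    (hXcl : @IsClosed _ (seqTop A) X)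
    (hc : @ContinuousOn _ _ (seqTop A) (seqTop B) φ X)
    (hopen : ∀ U : Set (ℤ → A), @IsOpen _ (seqTop A) U →
      ∃ V : Set (ℤ → B), @IsOpen _ (seqTop B) V ∧ φ '' (X ∩ U) = Y ∩ V)
    (k : ℕ) :
    ∃ m : ℕ, ∀ x ∈ X, ∀ y ∈ Y, y ∈ cylSet (φ x) m →
      ∃ x' ∈ X, x' ∈ cylSet x k ∧ φ x' = y := by
  letI : TopologicalSpace A := ⊥
  letI : TopologicalSpace B := ⊥
  haveI : DiscreteTopology A := ⟨rfl⟩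
  haveI : DiscreteTopology B := ⟨rfl⟩
  haveI : CompactSpace (ℤ → A) := Pi.compactSpace
  haveI : CompactSpace (ℤ → B) := Pi.compactSpace
  have hXc : IsCompact X := (show IsClosed X from hXcl).isCompact
  have key : ∀ x₀ ∈ X, ∃ m : ℕ, ∀ y ∈ φ '' (X ∩ cylSet x₀ k), ∀ y' ∈ Y,
      y' ∈ cylSet y m → y' ∈ φ '' (X ∩ cylSet x₀ k) := by
    intro x₀ _
    obtain ⟨V, hVo, hV⟩ := hopen (cylSet x₀ k) (cyl_open x₀ k)
    have hKc : IsCompact (φ '' (X ∩ cylSet x₀ k)) :=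
      (((show IsClosed X from hXcl).inter
        (show IsClosed (cylSet x₀ k) from cyl_closed x₀ k)).isCompact).image_of_continuousOn
        (hc.mono inter_subset_left)
    have key2 : ∀ y ∈ φ '' (X ∩ cylSet x₀ k), ∃ n : ℕ, cylSet y n ⊆ V := by
      intro y hy
      exact open_cyl_subset V hVo y (by rw [hV] at hy; exact hy.2)
    choose! g hg using key2
    obtain ⟨t, htK, hcov⟩ := hKc.elim_nhds_subcover (fun y => cylSet y (g y))
      (fun y _ => (cyl_open y (g y)).mem_nhds (mem_cylSet_self y (g y)))
    refine ⟨t.sup g, fun y hy y' hy'Y hy'c => ?_⟩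
    obtain ⟨y₀, hy₀t, hyc⟩ := by simpa using hcov hy
    have h1 : y' ∈ cylSet y₀ (g y₀) := by
      intro i hi
      rw [hy'c i (le_trans hi (by exact_mod_cast Finset.le_sup hy₀t))]
      exact hyc i hi
    rw [hV]
    exact ⟨hy'Y, hg y₀ (htK _ hy₀t) h1⟩
  choose! g hg using key
  obtain ⟨t, htX, hcov⟩ := hXc.elim_nhds_subcover (fun x => cylSet x k)
    (fun x _ => (cyl_open x k).mem_nhds (mem_cylSet_self x k))
  refine ⟨t.sup g, fun x hx y hyY hyc => ?_⟩
  obtain ⟨x₀, hx₀t, hxc⟩ := by simpa using hcov hx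
  have hφx : φ x ∈ φ '' (X ∩ cylSet x₀ k) := ⟨x, ⟨hx, hxc⟩, rfl⟩
  have h1 : y ∈ cylSet (φ x) (g x₀) := fun i hi =>
    hyc i (le_trans hi (by exact_mod_cast Finset.le_sup hx₀t))
  obtain ⟨x', ⟨hx'X, hx'c⟩, hφx'⟩ := hg x₀ (htX _ hx₀t) (φ x) hφx y hyY h1
  refine ⟨x', hx'X, ?_, hφx'⟩
  intro i hi
  rw [hx'c i hi, hxc i hi]

/-- shift by `n`. -/
def sh {A : Type*} (n : ℤ) (x : ℤ → A) : ℤ → A := fun i => x (i + n)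

lemma shiftMap_injective {A : Type*} : Function.Injective (shiftMap (A := A)) := by
  intro a b h
  funext i
  have := congrFun h (i - 1)
  simpa [shiftMap] using this

lemma sh_shiftMap {A : Type*} (n : ℤ) (x : ℤ → A) :
    shiftMap (sh n x) = sh (n + 1) x := by
  funext i; simp only [shiftMap, sh]; ring_nf

lemma sh_mem {A : Type*} {X : Set (ℤ → A)} (hX : shiftMap '' X = X) :
    ∀ n : ℤ, ∀ x ∈ X, sh n x ∈ X := by
  intro n
  induction n using Int.induction_on with
  | zero =>
    intro x hx
    have h0 : sh (0:ℤ) x = x := funext fun i => by simp [sh]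
    rwa [h0]
  | succ n ih =>
    intro x hx
    have : sh (n + 1 : ℤ) x = shiftMap (sh n x) := (sh_shiftMap n x).symm
    rw [this, ← hX]
    exact ⟨sh n x, ih x hx, rfl⟩
  | pred n ih =>
    intro x hx
    have h1 : sh (-n : ℤ) x ∈ X := ih x hx
    rw [← hX] at h1
    obtain ⟨z, hz, hze⟩ := h1
    have : z = sh (-n - 1 : ℤ) x := by
      apply shiftMap_injective
      rw [hze, sh_shiftMap]
      norm_num
    rwa [← this]

lemma sh_comm {A B : Type*} {X : Set (ℤ → A)} {φ : (ℤ → A) → (ℤ → B)}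
    (hX : shiftMap '' X = X) (hc : ∀ x ∈ X, φ (shiftMap x) = shiftMap (φ x)) :
    ∀ n : ℤ, ∀ x ∈ X, φ (sh n x) = sh n (φ x) := by
  intro n
  induction n using Int.induction_on with
  | zero =>
    intro x hx
    have h0 : sh (0:ℤ) x = x := funext fun i => by simp [sh]
    have h0' : sh (0:ℤ) (φ x) = φ x := funext fun i => by simp [sh]
    rw [h0, h0']
  | succ n ih =>
    intro x hx
    have h1 : sh (n + 1 : ℤ) x = shiftMap (sh n x) := (sh_shiftMap n x).symm
    rw [h1, hc (sh n x) (sh_mem hX n x hx), ih x hx, sh_shiftMap]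
  | pred n ih =>
    intro x hx
    have hmem : sh (-n - 1 : ℤ) x ∈ X := sh_mem hX _ x hx
    have h1 : shiftMap (sh (-n - 1 : ℤ) x) = sh (-n : ℤ) x := by
      rw [sh_shiftMap]; norm_num
    have h2 : φ (sh (-n : ℤ) x) = shiftMap (φ (sh (-n - 1 : ℤ) x)) := by
      rw [← h1, hc _ hmem]
    apply shiftMap_injective
    rw [← h2, ih x hx, sh_shiftMap]
    norm_num

/-- SFT gluing. -/
lemma sft_glue {A : Type*} {X : Set (ℤ → A)} {F : Finset (List A)}
    (hF : X = {x | ∀ u ∈ F, ∀ i : ℤ, ¬ OccursAt x u i}) {M : ℕ}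
    (hM : ∀ u ∈ F, u.length ≤ M)
    {z z' : ℤ → A} (hz : z ∈ X) (hz' : z' ∈ X) (a : ℤ)
    (hag : ∀ i : ℤ, a ≤ i → i ≤ a + (M : ℤ) - 1 → z i = z' i) :
    (fun i => if i < a then z i else z' i) ∈ X := by
  rw [hF]
  intro u hu j hocc
  by_cases hj : a ≤ j
  · refine (hF ▸ hz') u hu j ?_
    intro t
    have ht := hocc t
    simp only at ht
    rwa [if_neg (by omega : ¬ (j + ((t : ℕ) : ℤ) < a))] at ht
  · refine (hF ▸ hz) u hu j ?_
    intro t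
    have ht := hocc t
    simp only at ht
    by_cases h2 : j + ((t : ℕ) : ℤ) < a
    · rwa [if_pos h2] at ht
    · rw [if_neg h2] at ht
      rw [← ht]
      apply hag
      · omega
      · have h3 : (t : ℕ) < u.length := t.isLt
        have h4 : u.length ≤ M := hM u hu
        omega

/-- An open code on a shift of finite type has a uniform
lifting length. -/
theorem open_on_SFT_has_uniformLiftingLength
    {A B : Type*} [Fintype A] [Fintype B]
    (X : Set (ℤ → A)) (Y : Set (ℤ → B)) (φ : (ℤ → A) → (ℤ → B))
    (hX : IsSFT X) (hY : IsShiftSpace Y) (hφ : IsCode X Y φ)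
    (hopen : IsOpenCode X Y φ) :
    HasUniformLiftingLength X Y φ := by
  obtain ⟨⟨hXne, hXcl, hXsh⟩, F, hF⟩ := hX
  obtain ⟨hYne, hYcl, hYsh⟩ := hY
  obtain ⟨hmaps, hcont, hcomm⟩ := hφ
  obtain ⟨N, hN⟩ := chl_radius X φ hXcl hcont
  set M : ℕ := F.sup List.length with hMdef
  have hM : ∀ u ∈ F, u.length ≤ M := fun u hu => Finset.le_sup hu
  set r : ℕ := N + M with hrdef
  obtain ⟨m₀, hm₀⟩ := unif_radius X Y φ hXcl hcont hopen r
  set l : ℕ := max m₀ r with hldef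
  have hm₀l : m₀ ≤ l := le_max_left _ _
  have hrl : r ≤ l := le_max_right _ _
  refine ⟨l, fun k x hx y hy hagree => ?_⟩
  -- pointwise block-code property
  have blk : ∀ i : ℤ, ∀ z ∈ X, ∀ z' ∈ X,
      (∀ j : ℤ, |j - i| ≤ (N : ℤ) → z j = z' j) → φ z i = φ z' i := by
    intro i z hz z' hz' h
    have e1 : φ z i = φ (sh i z) 0 := by
      rw [sh_comm hXsh hcomm i z hz]; simp [sh]
    have e2 : φ z' i = φ (sh i z') 0 := by
      rw [sh_comm hXsh hcomm i z' hz']; simp [sh]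
    rw [e1, e2]
    exact hN (sh i z') (sh_mem hXsh i z' hz') (sh i z) (sh_mem hXsh i z hz)
      (fun j hj => h (j + i) (by simpa using hj))
  -- right lift
  have hxR : sh (k : ℤ) x ∈ X := sh_mem hXsh k x hx
  have hyR : sh (k : ℤ) y ∈ Y := sh_mem hYsh k y hy
  have hyRc : sh (k : ℤ) y ∈ cylSet (φ (sh (k : ℤ) x)) m₀ := by
    intro i hi
    rw [sh_comm hXsh hcomm k x hx]
    have : φ x (i + k) = y (i + k) := by
      apply hagree
      rw [abs_le] at hi ⊢
      omega
    simpa [sh] using this.symm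
  obtain ⟨z, hzX, hzc, hφz⟩ := hm₀ (sh (k : ℤ) x) hxR (sh (k : ℤ) y) hyR hyRc
  set uR : ℤ → A := sh (-(k : ℤ)) z with huRdef
  have huRX : uR ∈ X := sh_mem hXsh _ z hzX
  have hφuR : φ uR = y := by
    rw [huRdef, sh_comm hXsh hcomm _ z hzX, hφz]
    funext i
    simp only [sh]
    congr 1
    ring
  have hR : ∀ i : ℤ, |i - (k : ℤ)| ≤ (r : ℤ) → uR i = x i := by
    intro i hi
    have h1 : z (i + -(k : ℤ)) = sh (k : ℤ) x (i + -(k : ℤ)) := by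
      apply hzc
      have : i + -(k : ℤ) = i - k := by ring
      rw [this]; exact hi
    have h2 : sh (k : ℤ) x (i + -(k : ℤ)) = x i := by
      simp only [sh]; congr 1; ring
    show z (i + -(k : ℤ)) = x i
    rw [h1, h2]
  -- left lift
  have hxL : sh (-(k : ℤ)) x ∈ X := sh_mem hXsh _ x hx
  have hyL : sh (-(k : ℤ)) y ∈ Y := sh_mem hYsh _ y hy
  have hyLc : sh (-(k : ℤ)) y ∈ cylSet (φ (sh (-(k : ℤ)) x)) m₀ := by
    intro i hi
    rw [sh_comm hXsh hcomm _ x hx]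
    have : φ x (i + -(k : ℤ)) = y (i + -(k : ℤ)) := by
      apply hagree
      rw [abs_le] at hi ⊢
      omega
    simpa [sh] using this.symm
  obtain ⟨z', hz'X, hz'c, hφz'⟩ := hm₀ (sh (-(k : ℤ)) x) hxL (sh (-(k : ℤ)) y) hyL hyLc
  set uL : ℤ → A := sh (k : ℤ) z' with huLdef
  have huLX : uL ∈ X := sh_mem hXsh _ z' hz'X
  have hφuL : φ uL = y := by
    rw [huLdef, sh_comm hXsh hcomm _ z' hz'X, hφz']
    funext i
    simp only [sh]
    congr 1
    ring
  have hL : ∀ i : ℤ, |i + (k : ℤ)| ≤ (r : ℤ) → uL i = x i := by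
    intro i hi
    have h1 : z' (i + (k : ℤ)) = sh (-(k : ℤ)) x (i + (k : ℤ)) := hz'c _ hi
    have h2 : sh (-(k : ℤ)) x (i + (k : ℤ)) = x i := by
      simp only [sh]; congr 1; ring
    show z' (i + (k : ℤ)) = x i
    rw [h1, h2]
  -- splice
  set w1 : ℤ → A := fun i => if i < -(k : ℤ) then uL i else x i with hw1def
  have hw1X : w1 ∈ X := by
    apply sft_glue hF hM huLX hx (-(k : ℤ))
    intro i h1 h2
    apply hL
    rw [abs_le]
    omega
  set x' : ℤ → A := fun i => if i < (k : ℤ) then w1 i else uR i with hx'def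
  have hx'X : x' ∈ X := by
    apply sft_glue hF hM hw1X huRX (k : ℤ)
    intro i h1 h2
    rw [hw1def]
    simp only
    rw [if_neg (by omega : ¬ i < -(k : ℤ))]
    exact (hR i (by rw [abs_le]; omega)).symm
  -- values of x'
  have hx'x : ∀ j : ℤ, -(k : ℤ) - r ≤ j → j ≤ (k : ℤ) + r → x' j = x j := by
    intro j h1 h2
    rw [hx'def]; simp only
    by_cases hj : j < (k : ℤ)
    · rw [if_pos hj, hw1def]; simp only
      by_cases hj2 : j < -(k : ℤ)
      · rw [if_pos hj2]; exact hL j (by rw [abs_le]; omega)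
      · rw [if_neg hj2]
    · rw [if_neg hj]; exact hR j (by rw [abs_le]; omega)
  have hx'L : ∀ j : ℤ, j ≤ -(k : ℤ) + r → x' j = uL j := by
    intro j h1
    by_cases hj2 : j < -(k : ℤ)
    · rw [hx'def]; simp only
      rw [if_pos (by omega : j < (k : ℤ)), hw1def]
      simp only
      rw [if_pos hj2]
    · rw [hx'x j (by omega) (by omega), hL j (by rw [abs_le]; omega)]
  have hx'R : ∀ j : ℤ, (k : ℤ) - r ≤ j → x' j = uR j := by
    intro j h1
    by_cases hj : j < (k : ℤ)
    · rw [hx'x j (by omega) (by omega), hR j (by rw [abs_le]; omega)]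
    · rw [hx'def]; simp only
      rw [if_neg hj]
  refine ⟨x', hx'X, ?_, ?_⟩
  · intro i hi
    rw [abs_le] at hi
    exact hx'x i (by omega) (by omega)
  · funext i
    have hrZ : (r : ℤ) = (N : ℤ) + (M : ℤ) := by rw [hrdef]; push_cast; ring
    by_cases h1 : i ≤ -(k : ℤ) + M
    · rw [blk i x' hx'X uL huLX (fun j hj => hx'L j (by rw [abs_le] at hj; omega)),
        hφuL]
    · by_cases h2 : (k : ℤ) - M ≤ i
      · rw [blk i x' hx'X uR huRX (fun j hj => hx'R j (by rw [abs_le] at hj; omega)),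
          hφuR]
      · rw [blk i x' hx'X x hx (fun j hj => hx'x j (by rw [abs_le] at hj; omega)
          (by rw [abs_le] at hj; omega))]
        apply hagree
        rw [abs_le]
        omega
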